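/- Let α ∈ [0, 1), γ := √(α/(1−α)), and θ ≥ 0. Let P̂ be a probability measure on ℝ with finite second moment, mean μ̂ and standard deviation σ̂. Let P be a probability measure on ℝ with finite second moment such that there exists a coupling ψ of P and P̂ with ∫_{ℝ×ℝ} (x − y)² dψ(x, y) ≤ θ². Then CVaR_α(P) ≤ μ̂ + γσ̂ + θ√(1 + γ²), where CVaR_α(P) := inf over z ∈ ℝ of ( z + (1/(1−α)) ∫ max(x − z, 0) dP(x) ). -/

import Mathlib

open MeasureTheory

section Helpers

variable {Ω : Type*} [MeasurableSpace Ω] {μ : Measure Ω}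

/-- Cauchy–Schwarz inequality for integrals. -/
lemma my_cs_integral (f g : Ω → ℝ) (hf : MemLp f 2 μ) (hg : MemLp g 2 μ) :
    ∫ a, f a * g a ∂μ ≤ Real.sqrt (∫ a, f a ^ 2 ∂μ) * Real.sqrt (∫ a, g a ^ 2 ∂μ) := by
  have h2 : (2 : ℝ).HolderConjugate 2 := ⟨by norm_num, by norm_num, by norm_num⟩
  have hof : ENNReal.ofReal (2 : ℝ) = 2 := by norm_num
  have key := integral_mul_norm_le_Lp_mul_Lq (μ := μ) h2 (by rw [hof]; exact hf)
    (by rw [hof]; exact hg)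
  have hfs : ∫ a, ‖f a‖ ^ (2 : ℝ) ∂μ = ∫ a, f a ^ 2 ∂μ := by
    refine integral_congr_ae (Filter.Eventually.of_forall fun a => ?_)
    show ‖f a‖ ^ (2 : ℝ) = f a ^ 2
    rw [show ((2 : ℝ)) = ((2 : ℕ) : ℝ) by norm_num, Real.rpow_natCast]
    simp [sq_abs]
  have hgs : ∫ a, ‖g a‖ ^ (2 : ℝ) ∂μ = ∫ a, g a ^ 2 ∂μ := by
    refine integral_congr_ae (Filter.Eventually.of_forall fun a => ?_)
    show ‖g a‖ ^ (2 : ℝ) = g a ^ 2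
    rw [show ((2 : ℝ)) = ((2 : ℕ) : ℝ) by norm_num, Real.rpow_natCast]
    simp [sq_abs]
  rw [hfs, hgs] at key
  have hfnn : (0 : ℝ) ≤ ∫ a, f a ^ 2 ∂μ := integral_nonneg fun a => sq_nonneg _
  have hgnn : (0 : ℝ) ≤ ∫ a, g a ^ 2 ∂μ := integral_nonneg fun a => sq_nonneg _
  have h1 : ∫ a, f a * g a ∂μ ≤ ∫ a, ‖f a‖ * ‖g a‖ ∂μ := by
    calc ∫ a, f a * g a ∂μ ≤ |∫ a, f a * g a ∂μ| := le_abs_self _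
      _ = ‖∫ a, f a * g a ∂μ‖ := (Real.norm_eq_abs _).symm
      _ ≤ ∫ a, ‖f a * g a‖ ∂μ := norm_integral_le_integral_norm _
      _ = ∫ a, ‖f a‖ * ‖g a‖ ∂μ := by simp [norm_mul]
  refine h1.trans (key.trans_eq ?_)
  rw [← Real.sqrt_eq_rpow, ← Real.sqrt_eq_rpow]

/-- `L¹`–`L²` bound on a probability space. -/
lemma my_abs_le_sqrt [IsProbabilityMeasure μ] (f : Ω → ℝ) (hf : MemLp f 2 μ) :
    ∫ a, |f a| ∂μ ≤ Real.sqrt (∫ a, f a ^ 2 ∂μ) := by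
  have := my_cs_integral (fun a => ‖f a‖) (fun _ => (1 : ℝ)) hf.norm (memLp_const 1)
  simpa [sq_abs] using this

/-- Triangle inequality for `L²` seminorms written with `Real.sqrt` of integrals. -/
lemma my_l2_triangle (f g : Ω → ℝ) (hf : MemLp f 2 μ) (hg : MemLp g 2 μ) :
    Real.sqrt (∫ a, (f a + g a) ^ 2 ∂μ) ≤
      Real.sqrt (∫ a, f a ^ 2 ∂μ) + Real.sqrt (∫ a, g a ^ 2 ∂μ) := by
  have hf2 : Integrable (fun a => f a ^ 2) μ := (memLp_two_iff_integrable_sq hf.1).mp hf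
  have hg2 : Integrable (fun a => g a ^ 2) μ := (memLp_two_iff_integrable_sq hg.1).mp hg
  have hfg : Integrable (fun a => f a * g a) μ := by
    refine Integrable.mono (hf2.add hg2) (hf.1.mul hg.1) ?_
    filter_upwards with a
    have h1 : |f a * g a| ≤ f a ^ 2 + g a ^ 2 := by
      rw [abs_mul]
      nlinarith [sq_nonneg (|f a| - |g a|), sq_abs (f a), sq_abs (g a),
        abs_nonneg (f a), abs_nonneg (g a)]
    calc ‖f a * g a‖ = |f a * g a| := rfl
      _ ≤ f a ^ 2 + g a ^ 2 := h1
      _ ≤ ‖f a ^ 2 + g a ^ 2‖ := le_abs_self _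
  have hexp : ∫ a, (f a + g a) ^ 2 ∂μ
      = ∫ a, f a ^ 2 ∂μ + 2 * ∫ a, f a * g a ∂μ + ∫ a, g a ^ 2 ∂μ := by
    have hrw : (fun a => (f a + g a) ^ 2)
        = fun a => f a ^ 2 + ((2 : ℝ) * (f a * g a) + g a ^ 2) := by
      funext a; ring
    have hI1 : Integrable (fun a => (2 : ℝ) * (f a * g a)) μ := hfg.const_mul 2
    have hI2 : Integrable (fun a => (2 : ℝ) * (f a * g a) + g a ^ 2) μ := hI1.add hg2
    rw [hrw, integral_add hf2 hI2, integral_add hI1 hg2, integral_const_mul _ _]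
    ring
  set A := ∫ a, f a ^ 2 ∂μ with hA
  set B := ∫ a, g a ^ 2 ∂μ with hB
  have hAnn : 0 ≤ A := integral_nonneg fun a => sq_nonneg _
  have hBnn : 0 ≤ B := integral_nonneg fun a => sq_nonneg _
  have hcs := my_cs_integral f g hf hg
  have h2 : ∫ a, (f a + g a) ^ 2 ∂μ ≤ (Real.sqrt A + Real.sqrt B) ^ 2 := by
    rw [hexp]
    nlinarith [Real.sq_sqrt hAnn, Real.sq_sqrt hBnn, Real.sqrt_nonneg A, Real.sqrt_nonneg B]
  calc Real.sqrt (∫ a, (f a + g a) ^ 2 ∂μ)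
      ≤ Real.sqrt ((Real.sqrt A + Real.sqrt B) ^ 2) := Real.sqrt_le_sqrt h2
    _ = Real.sqrt A + Real.sqrt B := Real.sqrt_sq (by positivity)

end Helpers

/-- The conditional value at risk of a probability measure `P` on `ℝ` at level `α`:
`CVaR_α(P) = inf_{z ∈ ℝ} ( z + (1/(1−α)) ∫ max(x − z, 0) dP(x) )`. -/
noncomputable def cvar (α : ℝ) (P : MeasureTheory.Measure ℝ) : ℝ :=
  ⨅ z : ℝ, (z + (1 / (1 - α)) * ∫ x, max (x - z) 0 ∂P)

/-- The mean–standard deviation bound on CVaR: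
`CVaR_α(P) ≤ μ_P + √(α/(1−α)) σ_P`. -/
lemma cvar_le_mean_add_std
    (α : ℝ) (hα0 : 0 ≤ α) (hα1 : α < 1)
    (P : Measure ℝ) [IsProbabilityMeasure P]
    (hP2 : Integrable (fun x => x ^ 2) P) :
    cvar α P ≤ (∫ x, x ∂P) +
      Real.sqrt (α / (1 - α)) * Real.sqrt (∫ x, (x - ∫ y, y ∂P) ^ 2 ∂P) := by
  have h1α : (0 : ℝ) < 1 - α := by linarith
  have hPm : MemLp (fun x : ℝ => x) 2 P :=
    (memLp_two_iff_integrable_sq aestronglyMeasurable_id).mpr hP2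
  have hintX : Integrable (fun x : ℝ => x) P :=
    memLp_one_iff_integrable.mp (hPm.mono_exponent (by norm_num))
  set μP : ℝ := ∫ x, x ∂P with hμP
  set V : ℝ := ∫ x, (x - μP) ^ 2 ∂P with hVdef
  have hVnn : 0 ≤ V := integral_nonneg fun x => sq_nonneg _
  set σP : ℝ := Real.sqrt V with hσP
  have hσPnn : 0 ≤ σP := Real.sqrt_nonneg _
  have hσPsq : σP ^ 2 = V := Real.sq_sqrt hVnn
  -- basic facts for every shift z
  have hsubint : ∀ z : ℝ, Integrable (fun x => x - z) P := fun z =>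
    hintX.sub (integrable_const z)
  have hsubval : ∀ z : ℝ, ∫ x, (x - z) ∂P = μP - z := by
    intro z
    rw [integral_sub hintX (integrable_const z), integral_const]
    simp [hμP]
  have hmaxint : ∀ z : ℝ, Integrable (fun x => max (x - z) 0) P := fun z =>
    (hsubint z).pos_part
  have hmaxnn : ∀ z : ℝ, 0 ≤ ∫ x, max (x - z) 0 ∂P := fun z =>
    integral_nonneg fun x => le_max_right _ _
  have hmaxge : ∀ z : ℝ, μP - z ≤ ∫ x, max (x - z) 0 ∂P := by
    intro z
    have := integral_mono (hsubint z) (hmaxint z) fun x => le_max_left _ _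
    rwa [hsubval z] at this
  have hcoef1 : (1 : ℝ) ≤ 1 / (1 - α) := by
    rw [le_div_iff₀ h1α]; linarith
  have hcoef0 : (0 : ℝ) ≤ 1 / (1 - α) := by positivity
  -- boundedness below of the infimand
  have hbdd : BddBelow (Set.range fun z : ℝ => z + (1 / (1 - α)) * ∫ x, max (x - z) 0 ∂P) := by
    refine ⟨μP, ?_⟩
    rintro _ ⟨z, rfl⟩
    have h1 : ∫ x, max (x - z) 0 ∂P ≤ (1 / (1 - α)) * ∫ x, max (x - z) 0 ∂P :=
      le_mul_of_one_le_left (hmaxnn z) hcoef1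
    have h2 := hmaxge z
    simp only
    linarith
  have hcvar_le : ∀ z : ℝ, cvar α P ≤ z + (1 / (1 - α)) * ∫ x, max (x - z) 0 ∂P :=
    fun z => ciInf_le hbdd z
  -- second moment about z
  have hmem_sub : ∀ z : ℝ, MemLp (fun x => x - z) 2 P := fun z => hPm.sub (memLp_const z)
  have hiV : Integrable (fun x => (x - μP) ^ 2) P :=
    (memLp_two_iff_integrable_sq (hmem_sub μP).1).mp (hmem_sub μP)
  have hmean0 : ∫ x, (x - μP) ∂P = 0 := by rw [hsubval]; ring
  have hshift : ∀ z : ℝ, ∫ x, (x - z) ^ 2 ∂P = V + (μP - z) ^ 2 := by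
    intro z
    have hrw : (fun x => (x - z) ^ 2)
        = fun x => (x - μP) ^ 2 + ((2 * (μP - z)) * (x - μP) + (μP - z) ^ 2) := by
      funext x; ring
    have hI1 : Integrable (fun x => (2 * (μP - z)) * (x - μP)) P := (hsubint μP).const_mul _
    have hI2 : Integrable (fun x => (2 * (μP - z)) * (x - μP) + (μP - z) ^ 2) P :=
      hI1.add (integrable_const _)
    rw [hrw, integral_add hiV hI2, integral_add hI1 (integrable_const _), integral_const_mul _ _,
      hmean0, integral_const]
    simp [hVdef]
  -- pointwise identity for max
  have hpt : ∀ u : ℝ, max u 0 = (u + |u|) / 2 := by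
    intro u
    rcases le_total 0 u with h | h
    · rw [max_eq_left h, abs_of_nonneg h]; ring
    · rw [max_eq_right h, abs_of_nonpos h]; ring
  -- the key bound for each t
  have hA : ∀ t : ℝ, cvar α P ≤
      μP + t + (1 / (2 * (1 - α))) * (-t + Real.sqrt (V + t ^ 2)) := by
    intro t
    set z : ℝ := μP + t with hz
    have habsle : ∫ x, |x - z| ∂P ≤ Real.sqrt (V + t ^ 2) := by
      have h1 := my_abs_le_sqrt (fun x => x - z) (hmem_sub z)
      rw [hshift z] at h1
      have : μP - z = -t := by rw [hz]; ring
      rw [this] at h1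
      simpa [neg_sq] using h1
    have hImax : ∫ x, max (x - z) 0 ∂P ≤ (-t + Real.sqrt (V + t ^ 2)) / 2 := by
      have hcongr : ∫ x, max (x - z) 0 ∂P = (∫ x, (x - z) ∂P + ∫ x, |x - z| ∂P) / 2 := by
        rw [← integral_add (hsubint z) (hsubint z).abs]
        rw [show (fun x => max (x - z) 0) = fun x => (x - z + |x - z|) / 2 by
          funext x; exact hpt _, integral_div]
      rw [hcongr, hsubval z]
      have : μP - z = -t := by rw [hz]; ring
      rw [this]
      linarith
    have h1 := hcvar_le z
    have h2 : (1 / (1 - α)) * ∫ x, max (x - z) 0 ∂P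
        ≤ (1 / (1 - α)) * ((-t + Real.sqrt (V + t ^ 2)) / 2) :=
      mul_le_mul_of_nonneg_left hImax hcoef0
    have h3 : (1 / (1 - α)) * ((-t + Real.sqrt (V + t ^ 2)) / 2)
        = (1 / (2 * (1 - α))) * (-t + Real.sqrt (V + t ^ 2)) := by
      simp only [one_div, mul_inv]
      ring
    rw [h3] at h2
    rw [hz] at h1
    linarith
  -- now optimize over t
  rcases eq_or_lt_of_le hα0 with hz0 | hpos
  · -- α = 0
    have hγz : Real.sqrt (α / (1 - α)) = 0 := by rw [← hz0]; simp
    rw [hγz, zero_mul, add_zero]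
    refine le_of_forall_pos_le_add fun ε hε => ?_
    set t : ℝ := -(V + 4 * ε ^ 2) / (4 * ε) with ht
    have hεne : (4 : ℝ) * ε ≠ 0 := by positivity
    have ht4 : 4 * ε * t = -(V + 4 * ε ^ 2) := by
      rw [ht]; field_simp
    have htneg : t ≤ 0 := by nlinarith [sq_nonneg ε]
    have hs : Real.sqrt (V + t ^ 2) ≤ 2 * ε - t := by
      have h2 : V + t ^ 2 ≤ (2 * ε - t) ^ 2 := by nlinarith
      calc Real.sqrt (V + t ^ 2) ≤ Real.sqrt ((2 * ε - t) ^ 2) := Real.sqrt_le_sqrt h2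
        _ = 2 * ε - t := Real.sqrt_sq (by nlinarith)
    have h1 := hA t
    have hcv : (1 : ℝ) / (2 * (1 - α)) = 1 / 2 := by rw [← hz0]; norm_num
    rw [hcv] at h1
    have hnn : 0 ≤ Real.sqrt (V + t ^ 2) := Real.sqrt_nonneg _
    nlinarith
  · -- 0 < α
    set s : ℝ := Real.sqrt (α * (1 - α)) with hs
    have hs0 : 0 < s := Real.sqrt_pos.mpr (mul_pos hpos h1α)
    have hs2 : s ^ 2 = α * (1 - α) := Real.sq_sqrt (mul_pos hpos h1α).le
    set γ : ℝ := Real.sqrt (α / (1 - α)) with hγ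
    have hγs : γ * s = α := by
      rw [hγ, hs, ← Real.sqrt_mul (by positivity)]
      rw [show α / (1 - α) * (α * (1 - α)) = α ^ 2 by field_simp]
      exact Real.sqrt_sq hα0
    set t : ℝ := σP * (2 * α - 1) / (2 * s) with ht
    have hroot : Real.sqrt (V + t ^ 2) = σP / (2 * s) := by
      have hVt : V + t ^ 2 = (σP / (2 * s)) ^ 2 := by
        rw [ht]
        field_simp
        nlinarith [hσPsq, hs2]
      rw [hVt, Real.sqrt_sq (by positivity)]
    have h1 := hA t
    rw [hroot] at h1
    have e1 : -t + σP / (2 * s) = σP * (1 - α) / s := by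
      rw [ht]; field_simp; ring
    have e2 : (1 / (2 * (1 - α))) * (σP * (1 - α) / s) = σP / (2 * s) := by
      field_simp
    have e3 : t + σP / (2 * s) = γ * σP := by
      have h4 : t + σP / (2 * s) = σP * α / s := by rw [ht]; field_simp; ring
      rw [h4, ← hγs]; field_simp
    have heq : t + (1 / (2 * (1 - α))) * (-t + σP / (2 * s)) = γ * σP := by
      rw [e1, e2, ← e3]
    linarith

set_option maxHeartbeats 1000000 in
theorem dr_cvar_upper_bound
    (α : ℝ) (hα : α ∈ Set.Ico (0 : ℝ) 1)
    (γ : ℝ) (hγ : γ = Real.sqrt (α / (1 - α)))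
    (θ : ℝ) (hθ : 0 ≤ θ)
    (Phat : Measure ℝ) [IsProbabilityMeasure Phat]
    (hPhat2 : Integrable (fun x => x ^ 2) Phat)
    (μh σh : ℝ) (hμh : μh = ∫ x, x ∂Phat)
    (hσh : σh = Real.sqrt (∫ x, (x - μh) ^ 2 ∂Phat))
    (P : Measure ℝ) [IsProbabilityMeasure P]
    (hP2 : Integrable (fun x => x ^ 2) P)
    (hW : ∃ ψ : Measure (ℝ × ℝ), IsProbabilityMeasure ψ ∧
      ψ.map Prod.fst = P ∧ ψ.map Prod.snd = Phat ∧
      (∫ z, (z.1 - z.2) ^ 2 ∂ψ) ≤ θ ^ 2) :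
    cvar α P ≤ μh + γ * σh + θ * Real.sqrt (1 + γ ^ 2) := by
  obtain ⟨hα0, hα1⟩ := hα
  obtain ⟨ψ, hψprob, hmap1, hmap2, hWle⟩ := hW
  haveI := hψprob
  -- means and variances
  obtain ⟨μP, hμP⟩ : ∃ r : ℝ, r = ∫ x, x ∂P := ⟨_, rfl⟩
  obtain ⟨V, hV⟩ : ∃ r : ℝ, r = ∫ x, (x - μP) ^ 2 ∂P := ⟨_, rfl⟩
  have hVnn : 0 ≤ V := hV ▸ integral_nonneg fun x => sq_nonneg _
  obtain ⟨σP, hσP⟩ : ∃ r : ℝ, r = Real.sqrt V := ⟨_, rfl⟩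
  obtain ⟨Vh, hVh⟩ : ∃ r : ℝ, r = ∫ x, (x - μh) ^ 2 ∂Phat := ⟨_, rfl⟩
  have hVhnn : 0 ≤ Vh := hVh ▸ integral_nonneg fun x => sq_nonneg _
  have hσh' : σh = Real.sqrt Vh := by rw [hσh, hVh]
  -- step 1 : the mean-std bound on P
  have hstep1 : cvar α P ≤ μP + γ * σP := by
    have h := cvar_le_mean_add_std α hα0 hα1 P hP2
    rw [← hμP, ← hV, ← hσP, ← hγ] at h
    exact h
  -- ℒ² facts on the coupling
  have hXsq : Integrable (fun z : ℝ × ℝ => z.1 ^ 2) ψ := by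
    have h := hP2
    rw [← hmap1] at h
    have := (integrable_map_measure ((continuous_pow 2).aestronglyMeasurable)
      measurable_fst.aemeasurable).mp h
    exact this
  have hYsq : Integrable (fun z : ℝ × ℝ => z.2 ^ 2) ψ := by
    have h := hPhat2
    rw [← hmap2] at h
    have := (integrable_map_measure ((continuous_pow 2).aestronglyMeasurable)
      measurable_snd.aemeasurable).mp h
    exact this
  have hXmem : MemLp (fun z : ℝ × ℝ => z.1) 2 ψ :=
    (memLp_two_iff_integrable_sq measurable_fst.aestronglyMeasurable).mpr hXsq
  have hYmem : MemLp (fun z : ℝ × ℝ => z.2) 2 ψ :=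
    (memLp_two_iff_integrable_sq measurable_snd.aestronglyMeasurable).mpr hYsq
  have hXYmem : MemLp (fun z : ℝ × ℝ => z.1 - z.2) 2 ψ := hXmem.sub hYmem
  have hintX : Integrable (fun z : ℝ × ℝ => z.1) ψ :=
    memLp_one_iff_integrable.mp (hXmem.mono_exponent (by norm_num))
  have hintY : Integrable (fun z : ℝ × ℝ => z.2) ψ :=
    memLp_one_iff_integrable.mp (hYmem.mono_exponent (by norm_num))
  have hintXY : Integrable (fun z : ℝ × ℝ => z.1 - z.2) ψ := hintX.sub hintY
  have hintXY2 : Integrable (fun z : ℝ × ℝ => (z.1 - z.2) ^ 2) ψ :=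
    (memLp_two_iff_integrable_sq hXYmem.1).mp hXYmem
  -- transfer of integrals along the marginals
  have hμ1 : ∫ z : ℝ × ℝ, z.1 ∂ψ = μP := by
    rw [hμP, ← hmap1]
    exact (integral_map (f := fun x : ℝ => x) measurable_fst.aemeasurable
      aestronglyMeasurable_id).symm
  have hμ2 : ∫ z : ℝ × ℝ, z.2 ∂ψ = μh := by
    rw [hμh, ← hmap2]
    exact (integral_map (f := fun x : ℝ => x) measurable_snd.aemeasurable
      aestronglyMeasurable_id).symm
  have hV1 : ∫ z : ℝ × ℝ, (z.1 - μP) ^ 2 ∂ψ = V := by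
    have hm : AEStronglyMeasurable (fun x : ℝ => (x - μP) ^ 2) (Measure.map Prod.fst ψ) :=
      ((measurable_id.sub measurable_const).pow_const 2).aestronglyMeasurable
    rw [hV, ← hmap1]
    exact (integral_map measurable_fst.aemeasurable hm).symm
  have hV2 : ∫ z : ℝ × ℝ, (z.2 - μh) ^ 2 ∂ψ = Vh := by
    have hm : AEStronglyMeasurable (fun x : ℝ => (x - μh) ^ 2) (Measure.map Prod.snd ψ) :=
      ((measurable_id.sub measurable_const).pow_const 2).aestronglyMeasurable
    rw [hVh, ← hmap2]
    exact (integral_map measurable_snd.aemeasurable hm).symm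
  -- Δ and the variance of the difference
  obtain ⟨Δ, hΔ⟩ : ∃ r : ℝ, r = μP - μh := ⟨_, rfl⟩
  have hΔint : ∫ z : ℝ × ℝ, (z.1 - z.2) ∂ψ = Δ := by
    rw [integral_sub hintX hintY, hμ1, hμ2, hΔ]
  obtain ⟨W2, hW2⟩ : ∃ r : ℝ, r = ∫ z : ℝ × ℝ, (z.1 - z.2) ^ 2 ∂ψ := ⟨_, rfl⟩
  obtain ⟨Var, hVar⟩ : ∃ r : ℝ, r = ∫ z : ℝ × ℝ, ((z.1 - z.2) - Δ) ^ 2 ∂ψ := ⟨_, rfl⟩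
  have hVarnn : 0 ≤ Var := hVar ▸ integral_nonneg fun z => sq_nonneg _
  have hVarval : Var = W2 - Δ ^ 2 := by
    have hrw : (fun z : ℝ × ℝ => ((z.1 - z.2) - Δ) ^ 2)
        = fun z => (z.1 - z.2) ^ 2 + ((-2 * Δ) * (z.1 - z.2) + Δ ^ 2) := by
      funext z; ring
    have hI1 : Integrable (fun z : ℝ × ℝ => (-2 * Δ) * (z.1 - z.2)) ψ := hintXY.const_mul _
    have hI2 : Integrable (fun z : ℝ × ℝ => (-2 * Δ) * (z.1 - z.2) + Δ ^ 2) ψ :=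
      hI1.add (integrable_const _)
    rw [hVar, hrw, integral_add hintXY2 hI2, integral_add hI1 (integrable_const _),
      integral_const_mul _ _, hΔint, integral_const]
    simp [hW2]
    ring
  have hVarW2 : Δ ^ 2 + Var ≤ θ ^ 2 := by
    have : W2 ≤ θ ^ 2 := hW2 ▸ hWle
    linarith [hVarval]
  -- both triangle inequalities, giving |σP - σh| ≤ √Var
  have hXYDmem : MemLp (fun z : ℝ × ℝ => (z.1 - z.2) - Δ) 2 ψ :=
    hXYmem.sub (memLp_const Δ)
  have htri1 : σP ≤ σh + Real.sqrt Var := by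
    have h := my_l2_triangle (fun z : ℝ × ℝ => z.2 - μh)
      (fun z : ℝ × ℝ => (z.1 - z.2) - Δ) (hYmem.sub (memLp_const μh)) hXYDmem
    have he : ∫ z : ℝ × ℝ, (z.2 - μh + (z.1 - z.2 - Δ)) ^ 2 ∂ψ
        = ∫ z : ℝ × ℝ, (z.1 - μP) ^ 2 ∂ψ :=
      integral_congr_ae (Filter.Eventually.of_forall fun z => by rw [hΔ]; ring_nf)
    rw [he, hV1, hV2, ← hVar] at h
    rw [hσP, hσh']
    exact h
  have htri2 : σh ≤ σP + Real.sqrt Var := by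
    have h := my_l2_triangle (fun z : ℝ × ℝ => z.1 - μP)
      (fun z : ℝ × ℝ => Δ - (z.1 - z.2)) (hXmem.sub (memLp_const μP))
      ((memLp_const Δ).sub hXYmem)
    have he : ∫ z : ℝ × ℝ, (z.1 - μP + (Δ - (z.1 - z.2))) ^ 2 ∂ψ
        = ∫ z : ℝ × ℝ, (z.2 - μh) ^ 2 ∂ψ :=
      integral_congr_ae (Filter.Eventually.of_forall fun z => by rw [hΔ]; ring_nf)
    have he2 : ∫ z : ℝ × ℝ, (Δ - (z.1 - z.2)) ^ 2 ∂ψ = Var := by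
      rw [hVar]
      exact integral_congr_ae (Filter.Eventually.of_forall fun z => by ring)
    rw [he, hV1, hV2, he2] at h
    rw [hσP, hσh']
    exact h
  -- the Gelbrich-type bound
  have hsqVar : Real.sqrt Var ^ 2 = Var := Real.sq_sqrt hVarnn
  have hsqVarnn : 0 ≤ Real.sqrt Var := Real.sqrt_nonneg _
  have hkey : Δ ^ 2 + (σP - σh) ^ 2 ≤ θ ^ 2 := by nlinarith
  -- conclude
  have hγnn : 0 ≤ γ := hγ ▸ Real.sqrt_nonneg _
  have hfin : Δ + γ * (σP - σh) ≤ θ * Real.sqrt (1 + γ ^ 2) := by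
    have h1 : (Δ + γ * (σP - σh)) ^ 2 ≤ (1 + γ ^ 2) * (Δ ^ 2 + (σP - σh) ^ 2) := by
      nlinarith [sq_nonneg (Δ * γ - (σP - σh))]
    have h2 : Δ + γ * (σP - σh) ≤ Real.sqrt ((1 + γ ^ 2) * (Δ ^ 2 + (σP - σh) ^ 2)) := by
      calc Δ + γ * (σP - σh) ≤ |Δ + γ * (σP - σh)| := le_abs_self _
        _ = Real.sqrt ((Δ + γ * (σP - σh)) ^ 2) := (Real.sqrt_sq_eq_abs _).symm
        _ ≤ Real.sqrt ((1 + γ ^ 2) * (Δ ^ 2 + (σP - σh) ^ 2)) := Real.sqrt_le_sqrt h1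
    have h3 : Real.sqrt ((1 + γ ^ 2) * (Δ ^ 2 + (σP - σh) ^ 2)) ≤ Real.sqrt (1 + γ ^ 2) * θ := by
      rw [Real.sqrt_mul (by positivity)]
      refine mul_le_mul_of_nonneg_left ?_ (Real.sqrt_nonneg _)
      calc Real.sqrt (Δ ^ 2 + (σP - σh) ^ 2) ≤ Real.sqrt (θ ^ 2) := Real.sqrt_le_sqrt hkey
        _ = θ := Real.sqrt_sq hθ
    calc Δ + γ * (σP - σh) ≤ Real.sqrt ((1 + γ ^ 2) * (Δ ^ 2 + (σP - σh) ^ 2)) := h2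
      _ ≤ Real.sqrt (1 + γ ^ 2) * θ := h3
      _ = θ * Real.sqrt (1 + γ ^ 2) := mul_comm _ _
  have hμeq : μP = μh + Δ := by rw [hΔ]; ring
  nlinarith [hstep1, hfin]
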